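/- Quantitative step of the Agol–Futer lemma: let k > 0 and let A ⊆ ℝ² be a connected set containing points (x₀, y₀) and (x₁, y₁) with y₀ < y₁ < 0 and |x₁ − x₀| < k. Then for every real r with 0 < r < (y₁ − y₀)/(2k), there exists an integer n such that the translate A + (n·k, 0) = {(x + n·k, y) : (x, y) ∈ A} intersects the line L_r = {(x, y) ∈ ℝ² : y = −r·x}. In particular, any subset of ℝ² that contains A and is invariant under the translation (x, y) ↦ (x + k, y) meets L_r for all such r. -/

import Mathlib

/-- Quantitative step of the Agol–Futer lemma: a connected set below the horizontal axis
whose endpoints have heights `y₀ < y₁ < 0` and horizontal extent less than `k` has a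
horizontal `ℤ·k`-translate meeting the line of slope `-r` through the origin whenever
`0 < r < (y₁ - y₀)/(2k)`. -/
theorem agol_futer_quantitative
    (k : ℝ) (hk : 0 < k) (A : Set (ℝ × ℝ)) (hA : IsConnected A)
    (x₀ y₀ x₁ y₁ : ℝ) (h₀ : (x₀, y₀) ∈ A) (h₁ : (x₁, y₁) ∈ A)
    (hy₀ : y₀ < y₁) (hy₁ : y₁ < 0) (hx : |x₁ - x₀| < k) :
    ∀ r : ℝ, 0 < r → r < (y₁ - y₀) / (2 * k) →
      (∃ n : ℤ, ∃ q ∈ A, q.2 = -r * (q.1 + n * k)) ∧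
      (∀ S : Set (ℝ × ℝ), A ⊆ S → (∀ q : ℝ × ℝ, q ∈ S ↔ (q.1 + k, q.2) ∈ S) →
        ∃ q ∈ S, q.2 = -r * q.1) := by
  intro r hr hr'
  have hrk : 0 < r * k := mul_pos hr hk
  have h2k : r * (2 * k) < y₁ - y₀ := (lt_div_iff₀ (by positivity)).mp hr'
  have hxx : x₀ - x₁ < k := by
    have := abs_lt.mp hx
    linarith [this.1]
  set n : ℤ := ⌈(y₀ + r * x₀) / (r * k)⌉ with hn
  have hc1 : y₀ + r * x₀ ≤ n * (r * k) :=
    (div_le_iff₀ hrk).mp (Int.le_ceil _)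
  have hc2 : (n : ℝ) * (r * k) ≤ y₁ + r * x₁ := by
    have h3 : (n : ℝ) < (y₀ + r * x₀) / (r * k) + 1 := Int.ceil_lt_add_one _
    have h4 : (n : ℝ) * (r * k) < (y₀ + r * x₀) + r * k := by
      have := mul_lt_mul_of_pos_right h3 hrk
      calc (n : ℝ) * (r * k) < ((y₀ + r * x₀) / (r * k) + 1) * (r * k) := this
        _ = (y₀ + r * x₀) + r * k := by field_simp
    nlinarith [mul_lt_mul_of_pos_left hxx hr]
  have hcont : ContinuousOn (fun q : ℝ × ℝ => q.2 + r * q.1) A :=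
    (Continuous.add continuous_snd (continuous_const.mul continuous_fst)).continuousOn
  have himg := hA.isPreconnected.intermediate_value h₀ h₁ hcont ⟨hc1, hc2⟩
  obtain ⟨q, hq, hgq⟩ := himg
  simp only at hgq
  have key : ∀ (m : ℤ) (p : ℝ × ℝ), ∀ S : Set (ℝ × ℝ),
      (∀ q : ℝ × ℝ, q ∈ S ↔ (q.1 + k, q.2) ∈ S) → p ∈ S → (p.1 + m * k, p.2) ∈ S := by
    intro m
    induction m using Int.induction_on with
    | zero => intro p S hS hp; simpa using hp
    | succ i ih =>
        intro p S hS hp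
        have h1 := (hS (p.1 + i * k, p.2)).mp (ih p S hS hp)
        have : ((p.1 + (i : ℝ) * k) + k, p.2) = (p.1 + ((i : ℤ) + 1 : ℤ) * k, p.2) := by
          push_cast; ring_nf
        rwa [this] at h1
    | pred i ih =>
        intro p S hS hp
        have h1 := ih p S hS hp
        have heq : ((p.1 + (-(i : ℤ) - 1 : ℤ) * k) + k, p.2) = (p.1 + (-(i : ℤ) : ℤ) * k, p.2) := by
          push_cast; ring_nf
        have := (hS (p.1 + (-(i : ℤ) - 1 : ℤ) * k, p.2)).mpr (by rw [heq]; exact h1)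
        simpa using this
  constructor
  · exact ⟨-n, q, hq, by push_cast; linear_combination hgq⟩
  · intro S hAS hS
    refine ⟨(q.1 + (-n : ℤ) * k, q.2), key (-n) q S hS (hAS hq), ?_⟩
    push_cast
    linear_combination hgq
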